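/- The reflection ρ(x,y) = (y,x) of the Okubic affine plane is not a collineation: there exist s, t ∈ 𝒪 such that the image set ρ([s,t]) = {(s*x + t, x) : x ∈ 𝒪} is neither a line of the form {(x', s'*x' + t') : x' ∈ 𝒪} for any s', t' ∈ 𝒪 nor a vertical line {c}×𝒪 for any c ∈ 𝒪. -/
import Mathlib


open Matrix Complex

noncomputable section

/-- `3 × 3` complex matrices. -/
abbrev M3 : Type := Matrix (Fin 3) (Fin 3) ℂ

/-- The real Okubo algebra: `3 × 3` traceless Hermitian complex matrices. -/
def Okubo : Set M3 := {x | x.IsHermitian ∧ x.trace = 0}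

/-- The constant `μ = (3 + i√3)/6`. -/
def okMu : ℂ := (3 + (Real.sqrt 3 : ℂ) * Complex.I) / 6

/-- The Okubo product `x*y = μ·(xy) + μ̄·(yx) − (1/3)Tr(xy)·Id`. -/
def omul (x y : M3) : M3 :=
  okMu • (x * y) + (starRingEnd ℂ) okMu • (y * x) - ((1 / 3 : ℂ) * (x * y).trace) • (1 : M3)

/-- The Okubic norm `n(x) = (1/6)Tr(x²)` (real-valued on Hermitian matrices). -/
def onorm (x : M3) : ℝ := (1 / 6) * ((x * x).trace).re

/-- The polar form `⟨x,y⟩ = n(x+y) − n(x) − n(y)` of the Okubic norm. -/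
def opolar (x y : M3) : ℝ := onorm (x + y) - onorm x - onorm y


/-- The line `[s,t]` of the Okubic affine plane, as a set of points. -/
def lineSet (s t : M3) : Set (M3 × M3) := {p | ∃ x ∈ Okubo, p = (x, omul s x + t)}

/-- The vertical line `[c]` of the Okubic affine plane, as a set of points. -/
def vertSet (c : M3) : Set (M3 × M3) := {p | p.1 = c ∧ p.2 ∈ Okubo}

/-- The image of the line `[s,t]` under the reflection `ρ(x,y) = (y,x)`. -/
def rhoImage (s t : M3) : Set (M3 × M3) := {p | ∃ x ∈ Okubo, p = (omul s x + t, x)}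

def sM : M3 := !![1,0,0;0,-1,0;0,0,0]
def x2M : M3 := !![0,0,1;0,0,0;1,0,0]

lemma omul_zero (a : M3) : omul a 0 = 0 := by simp [omul]

lemma mu_re : okMu.re = 1/2 := by
  simp [okMu, Complex.div_re, Complex.add_re, Complex.mul_re]
  norm_num

lemma mu_im : okMu.im = Real.sqrt 3 / 6 := by
  simp [okMu, Complex.div_im, Complex.add_im, Complex.mul_im]

lemma hmu1 : okMu + (starRingEnd ℂ) okMu = 1 := by
  rw [Complex.add_conj, mu_re]
  norm_num

lemma hmune : okMu ≠ (starRingEnd ℂ) okMu := by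
  intro h
  have h2 := congrArg Complex.im h
  rw [Complex.conj_im, mu_im] at h2
  have : Real.sqrt 3 > 0 := Real.sqrt_pos.mpr (by norm_num)
  nlinarith [h2]

lemma sM_mem : sM ∈ Okubo := by
  constructor
  · ext i j
    fin_cases i <;> fin_cases j <;>
      simp [sM, Matrix.conjTranspose_apply, Matrix.vecHead, Matrix.vecTail]
  · simp [sM, Matrix.trace, Fin.sum_univ_three, Matrix.diag, Matrix.vecHead, Matrix.vecTail]

lemma x2M_mem : x2M ∈ Okubo := by
  constructor
  · ext i j
    fin_cases i <;> fin_cases j <;>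
      simp [x2M, Matrix.conjTranspose_apply, Matrix.vecHead, Matrix.vecTail]
  · simp [x2M, Matrix.trace, Fin.sum_univ_three, Matrix.diag, Matrix.vecHead, Matrix.vecTail]

lemma zero_mem : (0 : M3) ∈ Okubo := by
  exact ⟨by simp [Matrix.IsHermitian], by simp⟩


/-- The reflection `ρ(x,y) = (y,x)` of the Okubic affine plane is
not a collineation: there are `s, t ∈ 𝒪` such that the image `ρ([s,t])` is neither a
line `[s',t']` for any `s', t' ∈ 𝒪` nor a vertical line `[c]` for any `c ∈ 𝒪`. -/
theorem okubo_paper_stmt16 :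
    ∃ s ∈ Okubo, ∃ t ∈ Okubo,
      (∀ s' ∈ Okubo, ∀ t' ∈ Okubo, rhoImage s t ≠ lineSet s' t') ∧
      (∀ c ∈ Okubo, rhoImage s t ≠ vertSet c) := by
  refine ⟨sM, sM_mem, 0, zero_mem, ?_, ?_⟩
  · rintro s' ⟨hsH, hsT⟩ t' _ h
    -- membership transfer: for x in Okubo, (omul sM x + 0, x) ∈ lineSet s' t'
    have key : ∀ x ∈ Okubo, x = omul s' (omul sM x) + t' := by
      intro x hx
      have hmem : (omul sM x + 0, x) ∈ lineSet s' t' := by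
        rw [← h]; exact ⟨x, hx, rfl⟩
      obtain ⟨u, -, hu⟩ := hmem
      have h1 : omul sM x + 0 = u := congrArg Prod.fst hu
      have h2 : x = omul s' u + t' := congrArg Prod.snd hu
      rw [← h1, add_zero] at h2
      exact h2
    -- t' = 0
    have ht' : t' = 0 := by
      have h0 := key 0 zero_mem
      rw [omul_zero, omul_zero, zero_add] at h0
      exact h0.symm
    have e0 := key sM sM_mem
    have e2 := key x2M x2M_mem
    rw [ht', add_zero] at e0 e2
    -- trace-zero of s'
    have htr : s' 0 0 + s' 1 1 + s' 2 2 = 0 := by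
      simpa [Matrix.trace, Fin.sum_univ_three, Matrix.diag] using hsT
    -- hermitian entry
    have hC : (starRingEnd ℂ) (s' 2 2) = s' 2 2 := congrFun (congrFun hsH 2) 2
    -- scalar equation A from entry (1,1) of e0
    have eA := congrFun (congrFun e0 1) 1
    simp [omul, sM, Matrix.mul_apply, Fin.sum_univ_three, Matrix.trace, Matrix.diag,
      Matrix.one_apply, Matrix.vecHead, Matrix.vecTail] at eA
    rw [hmu1] at eA
    have hA : s' 0 0 = 3 := by
      linear_combination 3*eA + (s' 1 1) * hmu1 + (2/3)*htr
    have eB := congrFun (congrFun e2 0) 2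
    simp [omul, sM, x2M, Matrix.mul_apply, Fin.sum_univ_three, Matrix.trace, Matrix.diag,
      Matrix.one_apply, Matrix.vecHead, Matrix.vecTail, Matrix.vecMul,
      dotProduct] at eB
    rw [hA] at eB
    have eB' := congrArg (starRingEnd ℂ) eB
    simp only [_root_.map_add, _root_.map_mul, _root_.map_one, map_ofNat,
      Complex.conj_conj, hC] at eB'
    exact hmune (by
      linear_combination (-1/3)*eB + (1/3)*eB' - (okMu - (starRingEnd ℂ) okMu)*hmu1)
  · rintro c _ h
    have hmem : (omul sM sM + 0, sM) ∈ vertSet c := by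
      rw [← h]; exact ⟨sM, sM_mem, rfl⟩
    have hmem0 : ((0 : M3), (0:M3)) ∈ vertSet c := by
      rw [← h]
      exact ⟨0, zero_mem, by rw [omul_zero, add_zero]⟩
    have hc : c = 0 := hmem0.1.symm
    have h1 : omul sM sM + 0 = c := hmem.1
    rw [hc, add_zero] at h1
    have := congrFun (congrFun h1 0) 0
    simp [omul, sM, Matrix.mul_apply, Fin.sum_univ_three, Matrix.trace, Matrix.diag,
      Matrix.one_apply, Matrix.vecHead, Matrix.vecTail] at this
    rw [hmu1] at this
    norm_num at this


end
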